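/- (Lévy-type inequality for the RDE) Let R be the stationary solution, x_0 ∈ S, ξ > 0, η, ζ ∈ (0,1), δ ∈ (0,ζ) such that P(zR > ξ) ≥ η and P(zR < (1−ζ)ξ) ≥ η for all z ∈ B_δ(x_0), and such that z·y > 1−δ for all z,y ∈ B_δ(x_0). Let (σ_n)_{n≥1} be stopping times at which (xΠ_{σ_n})^∼ ∈ B_δ(x_0), with R^{σ_n} independent of ℱ_{σ_n} and distributed as R. Then for all x ∈ S, y ∈ B_δ(x_0), and t > 0: P(|xR| > t) ≥ η · P(sup_{n≥1} |x Q^{σ_n} + ξ · x Π_{σ_n} y| > t). -/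

import Mathlib

open MeasureTheory ProbabilityTheory
open scoped ENNReal

private abbrev Euc (d : ℕ) := EuclideanSpace ℝ (Fin d)

private lemma freeze_aux {Ω γ E : Type*} [MeasurableSpace Ω] [MeasurableSpace γ]
    [MeasurableSpace E]
    {μ : Measure Ω} [IsProbabilityMeasure μ]
    {Z : Ω → γ} {X : Ω → E} (hZ : Measurable Z) (hX : Measurable X)
    (hI : IndepFun Z X μ)
    {S : Set γ} (hS : MeasurableSet S)
    {P : Set (γ × E)} (hP : MeasurableSet P)
    {c : ℝ≥0∞} (hc : ∀ w ∈ S, c ≤ (μ.map X) {e | (w, e) ∈ P}) :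
    c * μ (Z ⁻¹' S) ≤ μ (Z ⁻¹' S ∩ {ω | (Z ω, X ω) ∈ P}) := by
  have hpair : Measurable fun ω => (Z ω, X ω) := hZ.prodMk hX
  have hmap : μ.map (fun ω => (Z ω, X ω)) = (μ.map Z).prod (μ.map X) :=
    (indepFun_iff_map_prod_eq_prod_map_map hZ.aemeasurable hX.aemeasurable).mp hI
  have hSP : MeasurableSet ((S ×ˢ (Set.univ : Set E)) ∩ P) :=
    (hS.prod MeasurableSet.univ).inter hP
  have hset : Z ⁻¹' S ∩ {ω | (Z ω, X ω) ∈ P}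
      = (fun ω => (Z ω, X ω)) ⁻¹' ((S ×ˢ (Set.univ : Set E)) ∩ P) := by
    ext ω; simp [Set.mem_prod]
  rw [hset, ← Measure.map_apply hpair hSP, hmap, Measure.prod_apply hSP]
  calc c * μ (Z ⁻¹' S) = c * (μ.map Z) S := by rw [Measure.map_apply hZ hS]
    _ = ∫⁻ w in S, c ∂(μ.map Z) := by rw [setLIntegral_const, mul_comm]
    _ ≤ ∫⁻ w in S, (μ.map X) (Prod.mk w ⁻¹' ((S ×ˢ (Set.univ : Set E)) ∩ P)) ∂(μ.map Z) := by
        refine setLIntegral_mono (measurable_measure_prodMk_left hSP) ?_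
        intro w hw
        have hpre : (Prod.mk w ⁻¹' ((S ×ˢ (Set.univ : Set E)) ∩ P)) = {e | (w, e) ∈ P} := by
          ext e; simp [hw]
        rw [hpre]; exact hc w hw
    _ ≤ ∫⁻ w, (μ.map X) (Prod.mk w ⁻¹' ((S ×ˢ (Set.univ : Set E)) ∩ P)) ∂(μ.map Z) :=
        setLIntegral_le_lintegral _ _

private lemma perk_aux {d : ℕ} {Ω : Type*} [m0 : MeasurableSpace Ω]
    {μ : Measure Ω} [IsProbabilityMeasure μ]
    {η : ℝ}
    {R : Ω → EuclideanSpace ℝ (Fin d)} (hR : Measurable R)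
    {𝒢 : ℕ → MeasurableSpace Ω} (hmono : Monotone 𝒢) (hle : ∀ k, 𝒢 k ≤ m0)
    {A : ℕ → Ω → ℝ} {B : ℕ → Ω → EuclideanSpace ℝ (Fin d)}
    {Rs : ℕ → Ω → EuclideanSpace ℝ (Fin d)}
    (hA : ∀ k, @Measurable Ω ℝ (𝒢 k) _ (A k))
    (hB : ∀ k, @Measurable Ω (EuclideanSpace ℝ (Fin d)) (𝒢 k) _ (B k))
    (hRs : ∀ k, Measurable (Rs k))
    {x₀ : EuclideanSpace ℝ (Fin d)} {δ : ℝ}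
    (hBball : ∀ k, ∀ᵐ ω ∂μ, B k ω ≠ 0 ∧ ‖B k ω‖⁻¹ • B k ω ∈ Metric.ball x₀ δ)
    (hindep : ∀ k, Indep (MeasurableSpace.comap (Rs k) inferInstance) (𝒢 k) μ)
    (hlaw : ∀ k, μ.map (Rs k) = μ.map R)
    {x : EuclideanSpace ℝ (Fin d)}
    (hdecomp : ∀ k, ∀ᵐ ω ∂μ,
      (inner ℝ x (R ω) : ℝ) = (inner ℝ (B k ω) (Rs k ω) : ℝ) + A k ω)
    {V : Set Ω}
    (k : ℕ) {ξ t : ℝ} {y : EuclideanSpace ℝ (Fin d)}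
    {thr : Set ℝ} (hthr : MeasurableSet thr)
    {cond : Set (EuclideanSpace ℝ (Fin d) × EuclideanSpace ℝ (Fin d))}
    (hcond : MeasurableSet cond)
    (hball : ∀ z : EuclideanSpace ℝ (Fin d), ‖z‖ = 1 → z ∈ Metric.ball x₀ δ →
      ENNReal.ofReal η ≤ μ {ω | (z, R ω) ∈ cond})
    (himp : ∀ ω, B k ω ≠ 0 → ‖B k ω‖⁻¹ • B k ω ∈ Metric.ball x₀ δ →
       A k ω + ξ * (inner ℝ (B k ω) y : ℝ) ∈ thr →
       (‖B k ω‖⁻¹ • B k ω, Rs k ω) ∈ cond →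
       (inner ℝ x (R ω) : ℝ) = (inner ℝ (B k ω) (Rs k ω) : ℝ) + A k ω → ω ∈ V) :
    ENNReal.ofReal η * μ {ω | (∀ j < k, |A j ω + ξ * (inner ℝ (B j ω) y : ℝ)| ≤ t)
        ∧ A k ω + ξ * (inner ℝ (B k ω) y : ℝ) ∈ thr}
      ≤ μ ({ω | (∀ j < k, |A j ω + ξ * (inner ℝ (B j ω) y : ℝ)| ≤ t)
        ∧ A k ω + ξ * (inner ℝ (B k ω) y : ℝ) ∈ thr} ∩ V) := by
  classical
  set Cset : Set Ω := {ω | (∀ j < k, |A j ω + ξ * (inner ℝ (B j ω) y : ℝ)| ≤ t)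
      ∧ A k ω + ξ * (inner ℝ (B k ω) y : ℝ) ∈ thr} with hCset
  set W : Ω → (ℕ → ℝ) × (ℕ → Euc d) :=
    fun ω => (fun j => A (min j k) ω, fun j => B (min j k) ω) with hWdef
  have hWk : @Measurable Ω ((ℕ → ℝ) × (ℕ → Euc d)) (𝒢 k) _ W := by
    letI : MeasurableSpace Ω := 𝒢 k
    refine Measurable.prodMk ?_ ?_
    · exact measurable_pi_lambda _ fun j =>
        (hA (min j k)).mono (hmono (min_le_right j k)) le_rfl
    · exact measurable_pi_lambda _ fun j =>
        (hB (min j k)).mono (hmono (min_le_right j k)) le_rfl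
  have hW : Measurable W := hWk.mono (hle k) le_rfl
  have hc1 : ∀ j, Measurable fun w : (ℕ → ℝ) × (ℕ → Euc d) => w.1 j := fun j => by
    exact (measurable_pi_apply j).comp measurable_fst
  have hbj : ∀ j, Measurable fun w : (ℕ → ℝ) × (ℕ → Euc d) => w.2 j := fun j => by
    exact (measurable_pi_apply j).comp measurable_snd
  have hbk : Measurable fun w : (ℕ → ℝ) × (ℕ → Euc d) => w.2 k := hbj k
  set z : (ℕ → ℝ) × (ℕ → Euc d) → Euc d := fun w => ‖w.2 k‖⁻¹ • w.2 k with hzdef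
  have hz : Measurable z := hbk.norm.inv.smul hbk
  set f : ℕ → (ℕ → ℝ) × (ℕ → Euc d) → ℝ :=
    fun j w => w.1 j + ξ * (inner ℝ (w.2 j) y : ℝ) with hfdef
  have hf : ∀ j, Measurable (f j) := fun j =>
    (hc1 j).add (measurable_const.mul (Measurable.inner (hbj j) measurable_const))
  set S : Set ((ℕ → ℝ) × (ℕ → Euc d)) :=
    {w | (∀ j < k, |f j w| ≤ t) ∧ f k w ∈ thr ∧ w.2 k ≠ 0 ∧ z w ∈ Metric.ball x₀ δ}
    with hSdef
  have hS : MeasurableSet S := by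
    have h1 : MeasurableSet {w : (ℕ → ℝ) × (ℕ → Euc d) | ∀ j < k, |f j w| ≤ t} := by
      have : {w : (ℕ → ℝ) × (ℕ → Euc d) | ∀ j < k, |f j w| ≤ t}
          = ⋂ j, ⋂ (_ : j < k), {w | |f j w| ≤ t} := by
        ext w; simp
      rw [this]
      exact MeasurableSet.iInter fun j => MeasurableSet.iInter fun _ =>
        measurableSet_le (hf j).abs measurable_const
    have h2 : MeasurableSet {w : (ℕ → ℝ) × (ℕ → Euc d) | f k w ∈ thr} := (hf k) hthr
    have h3 : MeasurableSet {w : (ℕ → ℝ) × (ℕ → Euc d) | w.2 k ≠ 0} :=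
      (hbk (measurableSet_singleton 0)).compl
    have h4 : MeasurableSet {w : (ℕ → ℝ) × (ℕ → Euc d) | z w ∈ Metric.ball x₀ δ} :=
      hz Metric.isOpen_ball.measurableSet
    have : S = {w : (ℕ → ℝ) × (ℕ → Euc d) | ∀ j < k, |f j w| ≤ t}
        ∩ ({w | f k w ∈ thr} ∩ ({w | w.2 k ≠ 0} ∩ {w | z w ∈ Metric.ball x₀ δ})) := by
      ext w; simp [hSdef, and_assoc]
    rw [this]
    exact h1.inter (h2.inter (h3.inter h4))
  set Ball : Set Ω := {ω | B k ω ≠ 0 ∧ ‖B k ω‖⁻¹ • B k ω ∈ Metric.ball x₀ δ} with hBalldef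
  have hWS : W ⁻¹' S = Cset ∩ Ball := by
    ext ω
    simp only [Set.mem_preimage, hSdef, Set.mem_setOf_eq, hCset, hBalldef,
      Set.mem_inter_iff, hfdef, hWdef, hzdef, min_self]
    constructor
    · rintro ⟨h1, h2, h3, h4⟩
      refine ⟨⟨fun j hj => ?_, h2⟩, h3, h4⟩
      have := h1 j hj
      rwa [min_eq_left hj.le] at this
    · rintro ⟨⟨h1, h2⟩, h3, h4⟩
      refine ⟨fun j hj => ?_, h2, h3, h4⟩
      rw [min_eq_left hj.le]
      exact h1 j hj
  have hIndep : IndepFun W (Rs k) μ := by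
    rw [indepFun_iff_measure_inter_preimage_eq_mul]
    intro s s' hs hs'
    have h := (Indep_iff _ _ μ).mp (hindep k) (Rs k ⁻¹' s') (W ⁻¹' s)
      ⟨s', hs', rfl⟩ (hWk hs)
    rw [Set.inter_comm] at h
    rw [h, mul_comm]
  set P : Set (((ℕ → ℝ) × (ℕ → Euc d)) × Euc d) := {p | (z p.1, p.2) ∈ cond} with hPdef
  have hP : MeasurableSet P := ((hz.comp measurable_fst).prodMk measurable_snd) hcond
  have hc : ∀ w ∈ S, ENNReal.ofReal η ≤ (μ.map (Rs k)) {e | (w, e) ∈ P} := by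
    intro w hw
    obtain ⟨-, -, h3, h4⟩ := hw
    have hz1 : ‖z w‖ = 1 := norm_smul_inv_norm h3
    have hmeas : MeasurableSet {e : Euc d | (z w, e) ∈ cond} :=
      (measurable_prodMk_left) hcond
    have : {e : Euc d | (w, e) ∈ P} = {e : Euc d | (z w, e) ∈ cond} := rfl
    rw [this, hlaw k, Measure.map_apply hR hmeas]
    exact hball (z w) hz1 h4
  have hF := freeze_aux hW (hRs k) hIndep hS hP hc
  have hae : W ⁻¹' S =ᵐ[μ] Cset := by
    rw [hWS]
    rw [Filter.eventuallyEq_set]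
    filter_upwards [hBball k] with ω hω
    simp only [Set.mem_inter_iff, hBalldef, Set.mem_setOf_eq]
    tauto
  have hsub : ((W ⁻¹' S ∩ {ω | (W ω, Rs k ω) ∈ P} : Set Ω)) ≤ᵐ[μ] ((Cset ∩ V : Set Ω)) := by
    filter_upwards [hdecomp k] with ω hdec hmem
    obtain ⟨hmem1, hmem2⟩ := hmem
    rw [hWS] at hmem1
    obtain ⟨hC, hb0, hbb⟩ := hmem1
    have hzW : z (W ω) = ‖B k ω‖⁻¹ • B k ω := by
      simp [hzdef, hWdef, min_self]
    have hcnd : (‖B k ω‖⁻¹ • B k ω, Rs k ω) ∈ cond := by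
      have := hmem2
      simp only [hPdef, Set.mem_setOf_eq] at this
      rwa [hzW] at this
    exact ⟨hC, himp ω hb0 hbb hC.2 hcnd hdec⟩
  calc ENNReal.ofReal η * μ Cset = ENNReal.ofReal η * μ (W ⁻¹' S) := by
        rw [measure_congr hae]
    _ ≤ μ (W ⁻¹' S ∩ {ω | (W ω, Rs k ω) ∈ P}) := hF
    _ ≤ μ (Cset ∩ V) := measure_mono_ae hsub

/-- Lévy-type inequality for the random difference equation: with `T_k = xQ^{σ_k} + ξ xΠ_{σ_k}y`
(here `A k = xQ^{σ_k}` and `B k = xΠ_{σ_k}`), the decomposition `xR = B_k · R^{σ_k} + A_k`,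
`R^{σ_k}` independent of `ℱ_{σ_k}` with the law of `R`, `(B_k)^∼ ∈ B_δ(x₀)` a.s., and the ball
conditions `P(zR > ξ) ≥ η`, `P(zR < (1−ζ)ξ) ≥ η` for `z ∈ B_δ(x₀)` together with
`z·w > 1−δ` on the ball, one has
`P(|xR| > t) ≥ η · P(sup_n |A_n + ξ⟨B_n, y⟩| > t)`. -/
theorem stmt17 {d : ℕ} (hd : 0 < d) {Ω : Type*} [m0 : MeasurableSpace Ω]
    (μ : Measure Ω) [IsProbabilityMeasure μ]
    (x₀ : EuclideanSpace ℝ (Fin d)) (hx₀ : ‖x₀‖ = 1)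
    (ξ η ζ δ : ℝ) (hξ : 0 < ξ) (hη : 0 < η) (hη1 : η < 1) (hζ : 0 < ζ) (hζ1 : ζ < 1)
    (hδ : 0 < δ) (hδζ : δ < ζ)
    (R : Ω → EuclideanSpace ℝ (Fin d)) (hR : Measurable R)
    (hball1 : ∀ z : EuclideanSpace ℝ (Fin d), ‖z‖ = 1 → z ∈ Metric.ball x₀ δ →
      η ≤ (μ {ω | ξ < (inner ℝ z (R ω) : ℝ)}).toReal)
    (hball2 : ∀ z : EuclideanSpace ℝ (Fin d), ‖z‖ = 1 → z ∈ Metric.ball x₀ δ →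
      η ≤ (μ {ω | (inner ℝ z (R ω) : ℝ) < (1 - ζ) * ξ}).toReal)
    (hdot : ∀ z w : EuclideanSpace ℝ (Fin d), ‖z‖ = 1 → ‖w‖ = 1 →
      z ∈ Metric.ball x₀ δ → w ∈ Metric.ball x₀ δ → 1 - δ < (inner ℝ z w : ℝ))
    (𝒢 : ℕ → MeasurableSpace Ω) (hmono : Monotone 𝒢) (hle : ∀ k, 𝒢 k ≤ m0)
    (A : ℕ → Ω → ℝ) (B : ℕ → Ω → EuclideanSpace ℝ (Fin d))
    (Rs : ℕ → Ω → EuclideanSpace ℝ (Fin d))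
    (hA : ∀ k, @Measurable Ω ℝ (𝒢 k) _ (A k))
    (hB : ∀ k, @Measurable Ω (EuclideanSpace ℝ (Fin d)) (𝒢 k) _ (B k))
    (hRs : ∀ k, Measurable (Rs k))
    (hBball : ∀ k, ∀ᵐ ω ∂μ, B k ω ≠ 0 ∧ ‖B k ω‖⁻¹ • B k ω ∈ Metric.ball x₀ δ)
    (x : EuclideanSpace ℝ (Fin d)) (hx : ‖x‖ = 1)
    (hdecomp : ∀ k, ∀ᵐ ω ∂μ,
      (inner ℝ x (R ω) : ℝ) = (inner ℝ (B k ω) (Rs k ω) : ℝ) + A k ω)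
    (hindep : ∀ k, Indep (MeasurableSpace.comap (Rs k) inferInstance) (𝒢 k) μ)
    (hlaw : ∀ k, μ.map (Rs k) = μ.map R)
    (y : EuclideanSpace ℝ (Fin d)) (hy : ‖y‖ = 1) (hyball : y ∈ Metric.ball x₀ δ)
    (t : ℝ) (ht : 0 < t) :
    η * (μ {ω | t < ⨆ k : ℕ, |A k ω + ξ * (inner ℝ (B k ω) y : ℝ)|}).toReal
      ≤ (μ {ω | t < |(inner ℝ x (R ω) : ℝ)|}).toReal := by
  classical
  set T : ℕ → Ω → ℝ := fun j ω => A j ω + ξ * (inner ℝ (B j ω) y : ℝ) with hTdef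
  set V : Set Ω := {ω | t < |(inner ℝ x (R ω) : ℝ)|} with hVdef
  set U : Set Ω := {ω | t < ⨆ k : ℕ, |T k ω|} with hUdef
  set Cp : ℕ → Set Ω := fun k =>
    {ω | (∀ j < k, |A j ω + ξ * (inner ℝ (B j ω) y : ℝ)| ≤ t)
      ∧ A k ω + ξ * (inner ℝ (B k ω) y : ℝ) ∈ Set.Ioi t} with hCpdef
  set Cm : ℕ → Set Ω := fun k =>
    {ω | (∀ j < k, |A j ω + ξ * (inner ℝ (B j ω) y : ℝ)| ≤ t)
      ∧ A k ω + ξ * (inner ℝ (B k ω) y : ℝ) ∈ Set.Iio (-t)} with hCmdef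
  -- measurability of basic objects
  have hTmeas : ∀ j, Measurable (T j) := fun j =>
    ((hA j).mono (hle j) le_rfl).add
      (measurable_const.mul
        (Measurable.inner ((hB j).mono (hle j) le_rfl) measurable_const))
  have hCpm : ∀ k, MeasurableSet (Cp k) := by
    intro k
    have h1 : MeasurableSet {ω | ∀ j < k, |T j ω| ≤ t} := by
      have : {ω : Ω | ∀ j < k, |T j ω| ≤ t}
          = ⋂ j, ⋂ (_ : j < k), {ω : Ω | |T j ω| ≤ t} := by
        ext ω; simp
      rw [this]
      exact MeasurableSet.iInter fun j => MeasurableSet.iInter fun _ =>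
        measurableSet_le (hTmeas j).abs measurable_const
    exact h1.inter ((hTmeas k) measurableSet_Ioi)
  have hCmm : ∀ k, MeasurableSet (Cm k) := by
    intro k
    have h1 : MeasurableSet {ω | ∀ j < k, |T j ω| ≤ t} := by
      have : {ω : Ω | ∀ j < k, |T j ω| ≤ t}
          = ⋂ j, ⋂ (_ : j < k), {ω : Ω | |T j ω| ≤ t} := by
        ext ω; simp
      rw [this]
      exact MeasurableSet.iInter fun j => MeasurableSet.iInter fun _ =>
        measurableSet_le (hTmeas j).abs measurable_const
    exact h1.inter ((hTmeas k) measurableSet_Iio)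
  -- the two per-k bounds
  have hCpV : ∀ k, ENNReal.ofReal η * μ (Cp k) ≤ μ (Cp k ∩ V) := by
    intro k
    refine perk_aux hR hmono hle hA hB hRs hBball hindep hlaw hdecomp k
      measurableSet_Ioi
      (cond := {p : EuclideanSpace ℝ (Fin d) × EuclideanSpace ℝ (Fin d) |
        ξ < (inner ℝ p.1 p.2 : ℝ)})
      (measurableSet_lt measurable_const (Measurable.inner measurable_fst measurable_snd))
      ?_ ?_
    · intro z hz1 hz2
      refine ENNReal.ofReal_le_of_le_toReal ?_
      exact hball1 z hz1 hz2
    · intro ω hb0 hbb hthr hcnd hdec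
      simp only [Set.mem_setOf_eq] at hcnd
      set b := B k ω with hbdef
      have hnb : (0 : ℝ) < ‖b‖ := norm_pos_iff.mpr hb0
      have hbz : b = ‖b‖ • (‖b‖⁻¹ • b) := by
        rw [smul_smul, mul_inv_cancel₀ hnb.ne', one_smul]
      have h1 : (inner ℝ b (Rs k ω) : ℝ) = ‖b‖ * (inner ℝ (‖b‖⁻¹ • b) (Rs k ω) : ℝ) := by
        conv_lhs => rw [hbz]
        rw [real_inner_smul_left]
      have h2 : (inner ℝ b y : ℝ) = ‖b‖ * (inner ℝ (‖b‖⁻¹ • b) y : ℝ) := by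
        conv_lhs => rw [hbz]
        rw [real_inner_smul_left]
      have hz1 : ‖(‖b‖⁻¹ • b)‖ = 1 := norm_smul_inv_norm hb0
      have hzy : (inner ℝ (‖b‖⁻¹ • b) y : ℝ) ≤ 1 := by
        have := real_inner_le_norm (‖b‖⁻¹ • b) y
        rwa [hz1, hy, one_mul] at this
      have hthr' : t < A k ω + ξ * (inner ℝ b y : ℝ) := hthr
      have hlt : t < (inner ℝ x (R ω) : ℝ) := by
        rw [hdec, h1]
        rw [h2] at hthr'
        nlinarith [mul_pos hnb (sub_pos.2 hcnd),
          mul_nonneg (mul_nonneg hnb.le hξ.le) (sub_nonneg.2 hzy)]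
      exact lt_of_lt_of_le hlt (le_abs_self _)
  have hCmV : ∀ k, ENNReal.ofReal η * μ (Cm k) ≤ μ (Cm k ∩ V) := by
    intro k
    refine perk_aux hR hmono hle hA hB hRs hBball hindep hlaw hdecomp k
      measurableSet_Iio
      (cond := {p : EuclideanSpace ℝ (Fin d) × EuclideanSpace ℝ (Fin d) |
        (inner ℝ p.1 p.2 : ℝ) < (1 - ζ) * ξ})
      (measurableSet_lt (Measurable.inner measurable_fst measurable_snd) measurable_const)
      ?_ ?_
    · intro z hz1 hz2
      refine ENNReal.ofReal_le_of_le_toReal ?_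
      exact hball2 z hz1 hz2
    · intro ω hb0 hbb hthr hcnd hdec
      simp only [Set.mem_setOf_eq] at hcnd
      set b := B k ω with hbdef
      have hnb : (0 : ℝ) < ‖b‖ := norm_pos_iff.mpr hb0
      have hbz : b = ‖b‖ • (‖b‖⁻¹ • b) := by
        rw [smul_smul, mul_inv_cancel₀ hnb.ne', one_smul]
      have h1 : (inner ℝ b (Rs k ω) : ℝ) = ‖b‖ * (inner ℝ (‖b‖⁻¹ • b) (Rs k ω) : ℝ) := by
        conv_lhs => rw [hbz]
        rw [real_inner_smul_left]
      have h2 : (inner ℝ b y : ℝ) = ‖b‖ * (inner ℝ (‖b‖⁻¹ • b) y : ℝ) := by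
        conv_lhs => rw [hbz]
        rw [real_inner_smul_left]
      have hz1 : ‖(‖b‖⁻¹ • b)‖ = 1 := norm_smul_inv_norm hb0
      have hzy : (1 : ℝ) - δ < (inner ℝ (‖b‖⁻¹ • b) y : ℝ) :=
        hdot (‖b‖⁻¹ • b) y hz1 hy hbb hyball
      have hthr' : A k ω + ξ * (inner ℝ b y : ℝ) < -t := hthr
      have hlt : (inner ℝ x (R ω) : ℝ) < -t := by
        rw [hdec, h1]
        rw [h2] at hthr'
        nlinarith [mul_pos hnb (sub_pos.2 hcnd),
          mul_pos (mul_pos hnb hξ) (show (0:ℝ) < ζ - δ by linarith)]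
      have : t < -(inner ℝ x (R ω) : ℝ) := by linarith
      exact lt_of_lt_of_le this (neg_le_abs _)
  -- covering of U by the disjoint first-passage sets
  have hU : U ⊆ ⋃ k, (Cp k ∪ Cm k) := by
    intro ω hω
    have hex : ∃ k, t < |T k ω| := by
      by_contra h
      push_neg at h
      have hsup : (⨆ k, |T k ω|) ≤ t := ciSup_le h
      rw [hUdef] at hω
      exact absurd hω (not_lt.2 (by simpa using hsup))
    set k := Nat.find hex with hkdef
    have hk : t < |T k ω| := Nat.find_spec hex
    have hmin : ∀ j < k, |T j ω| ≤ t := fun j hj => not_lt.1 (Nat.find_min hex hj)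
    refine Set.mem_iUnion.2 ⟨k, ?_⟩
    rcases lt_abs.mp hk with h | h
    · exact Or.inl ⟨hmin, h⟩
    · exact Or.inr ⟨hmin, show T k ω ∈ Set.Iio (-t) by simp only [Set.mem_Iio]; linarith⟩
  -- disjointness
  have hDabs : ∀ k ω, ω ∈ Cp k ∪ Cm k → t < |T k ω| := by
    intro k ω hω
    rcases hω with h | h
    · exact lt_of_lt_of_le h.2 (le_abs_self _)
    · have : T k ω < -t := h.2
      exact lt_of_lt_of_le (by linarith) (neg_le_abs _)
  have hdj : ∀ k l, k < l → Disjoint (Cp k ∪ Cm k) (Cp l ∪ Cm l) := by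
    intro k l hlt
    refine Set.disjoint_left.2 fun ω hωk hωl => ?_
    have h1 : t < |T k ω| := hDabs k ω hωk
    have h2 : |T k ω| ≤ t := by
      rcases hωl with h | h
      · exact h.1 k hlt
      · exact h.1 k hlt
    linarith
  have hdisj : Pairwise (Function.onFun Disjoint fun k => Cp k ∪ Cm k) := by
    intro k l hkl
    rcases lt_or_gt_of_ne hkl with h | h
    · exact hdj k l h
    · exact (hdj l k h).symm
  have hdisjpm : ∀ k, Disjoint (Cp k) (Cm k) := by
    intro k
    refine Set.disjoint_left.2 fun ω h1 h2 => ?_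
    have ha : t < T k ω := h1.2
    have hb : T k ω < -t := h2.2
    linarith
  -- measure computation
  have hVmeas : MeasurableSet V :=
    measurableSet_lt measurable_const (Measurable.inner measurable_const hR).abs
  have main : ENNReal.ofReal η * μ U ≤ μ V := by
    calc ENNReal.ofReal η * μ U
        ≤ ENNReal.ofReal η * μ (⋃ k, (Cp k ∪ Cm k)) :=
          mul_le_mul_right (measure_mono hU) _
      _ ≤ ENNReal.ofReal η * ∑' k, (μ (Cp k) + μ (Cm k)) := by
          refine mul_le_mul_right ?_ _
          refine le_trans (measure_iUnion_le _) (ENNReal.tsum_le_tsum fun k => ?_)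
          exact measure_union_le _ _
      _ = ∑' k, (ENNReal.ofReal η * μ (Cp k) + ENNReal.ofReal η * μ (Cm k)) := by
          rw [← ENNReal.tsum_mul_left]
          congr 1
          funext k
          rw [mul_add]
      _ ≤ ∑' k, (μ (Cp k ∩ V) + μ (Cm k ∩ V)) :=
          ENNReal.tsum_le_tsum fun k => add_le_add (hCpV k) (hCmV k)
      _ = ∑' k, μ ((Cp k ∩ V) ∪ (Cm k ∩ V)) := by
          congr 1
          funext k
          exact (measure_union ((hdisjpm k).mono Set.inter_subset_left
            Set.inter_subset_left) ((hCmm k).inter hVmeas)).symm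
      _ = μ (⋃ k, ((Cp k ∩ V) ∪ (Cm k ∩ V))) := by
          refine (measure_iUnion ?_ ?_).symm
          · intro k l hkl
            exact (hdisj hkl).mono
              (Set.union_subset_union Set.inter_subset_left Set.inter_subset_left)
              (Set.union_subset_union Set.inter_subset_left Set.inter_subset_left)
          · exact fun k => ((hCpm k).inter hVmeas).union ((hCmm k).inter hVmeas)
      _ ≤ μ V := by
          refine measure_mono (Set.iUnion_subset fun k => ?_)
          exact Set.union_subset Set.inter_subset_right Set.inter_subset_right
  have h1 : η * (μ U).toReal = (ENNReal.ofReal η * μ U).toReal := by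
    rw [ENNReal.toReal_mul, ENNReal.toReal_ofReal hη.le]
  calc η * (μ U).toReal = (ENNReal.ofReal η * μ U).toReal := h1
    _ ≤ (μ V).toReal := ENNReal.toReal_mono (measure_ne_top μ V) main
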